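/- Let k ≥ 1 and let S be a set of 2k+3 points in general position in ℝ^(2k). Then there exist two disjoint (k+1)-element subsets A, B ⊆ S such that conv A ∩ conv B ≠ ∅. -/

import Mathlib

open scoped Classical
open Finset

/-- A finite set of points in `ℝ^d` is in general position if every
`(d+1)`-element subset of it is affinely independent. -/
def GenPos (d : ℕ) (S : Finset (Fin d → ℝ)) : Prop :=
  ∀ T ⊆ S, T.card = d + 1 →
    AffineIndependent ℝ (fun x : (T : Set (Fin d → ℝ)) => (x : Fin d → ℝ))

private noncomputable def zsgn (x : ℝ) : ℤ := if 0 < x then 1 else if x < 0 then -1 else 0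

private lemma zsgn_pos {x : ℝ} (h : 0 < x) : zsgn x = 1 := if_pos h

private lemma zsgn_neg {x : ℝ} (h : x < 0) : zsgn x = -1 := by
  unfold zsgn; rw [if_neg (not_lt.2 h.le), if_pos h]

private lemma zsgn_zero : zsgn 0 = 0 := by unfold zsgn; simp

private lemma zsgn_mul (a b : ℝ) : zsgn (a * b) = zsgn a * zsgn b := by
  rcases lt_trichotomy a 0 with ha | ha | ha <;> rcases lt_trichotomy b 0 with hb | hb | hb
  · rw [zsgn_pos (mul_pos_of_neg_of_neg ha hb), zsgn_neg ha, zsgn_neg hb]; ring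
  · rw [hb, mul_zero, zsgn_zero]; simp
  · rw [zsgn_neg (mul_neg_of_neg_of_pos ha hb), zsgn_neg ha, zsgn_pos hb]; ring
  · rw [ha, zero_mul, zsgn_zero]; simp
  · rw [ha, zero_mul, zsgn_zero]; simp
  · rw [ha, zero_mul, zsgn_zero]; simp
  · rw [zsgn_neg (mul_neg_of_pos_of_neg ha hb), zsgn_pos ha, zsgn_neg hb]; ring
  · rw [hb, mul_zero, zsgn_zero]; simp
  · rw [zsgn_pos (mul_pos ha hb), zsgn_pos ha, zsgn_pos hb]; ring

private lemma signsum {n : ℕ} (x : Fin n → ℝ) :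
    ∑ i, zsgn (x i) =
      ((univ.filter fun i => 0 < x i).card : ℤ) - (univ.filter fun i => x i < 0).card := by
  classical
  rw [← Finset.sum_filter_add_sum_filter_not univ (fun i => 0 < x i)]
  rw [← Finset.sum_filter_add_sum_filter_not (univ.filter fun i => ¬ 0 < x i) (fun i => x i < 0)]
  have h1 : ∑ i ∈ univ.filter fun i => 0 < x i, zsgn (x i)
      = ((univ.filter fun i => 0 < x i).card : ℤ) := by
    rw [Finset.sum_congr rfl (fun i hi => ?_), Finset.sum_const, nsmul_eq_mul, mul_one]
    simp only [mem_filter] at hi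
    simp [zsgn, hi.2]
  have h2 : ∑ i ∈ (univ.filter fun i => ¬ 0 < x i).filter fun i => x i < 0, zsgn (x i)
      = -((univ.filter fun i => x i < 0).card : ℤ) := by
    rw [Finset.filter_filter]
    have : (univ.filter fun i => ¬ 0 < x i ∧ x i < 0) = univ.filter fun i => x i < 0 := by
      apply Finset.filter_congr; intro i _; constructor
      · exact fun h => h.2
      · exact fun h => ⟨not_lt.2 h.le, h⟩
    rw [this, Finset.sum_congr rfl (fun i hi => ?_), Finset.sum_const, nsmul_eq_mul, mul_neg_one]
    simp only [mem_filter] at hi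
    simp [zsgn, hi.2, not_lt.2 hi.2.le]
  have h3 : ∑ i ∈ (univ.filter fun i => ¬ 0 < x i).filter fun i => ¬ x i < 0, zsgn (x i) = 0 := by
    apply Finset.sum_eq_zero; intro i hi
    simp only [mem_filter] at hi
    simp [zsgn, hi.1.2, hi.2]
  rw [h1, h2, h3]; ring

private lemma split_sum {n : ℕ} {M : Type*} [AddCommGroup M] (lam : Fin n → ℝ) (f : Fin n → M)
    (hf : ∀ i, lam i = 0 → f i = 0) :
    (∑ i ∈ univ.filter fun i => 0 < lam i, f i) + (∑ i ∈ univ.filter fun i => lam i < 0, f i)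
      = ∑ i, f i := by
  classical
  rw [← Finset.sum_filter_add_sum_filter_not univ (fun i => 0 < lam i)]
  congr 1
  apply Finset.sum_subset
  · intro i hi; simp only [mem_filter] at hi ⊢; exact ⟨mem_univ i, not_lt.2 hi.2.le⟩
  · intro i hi hni
    simp only [mem_filter] at hi hni
    exact hf i (le_antisymm (not_lt.1 hi.2) (not_lt.1 fun h => hni ⟨mem_univ i, h⟩))

private lemma ivt (N : ℕ) (f : ℕ → ℤ) (hstep : ∀ m < N, |f (m + 1) - f m| ≤ 2)
    (heven : ∀ m ≤ N, Even (f m)) (h0 : f 0 ≤ 0) (hN : 0 ≤ f N) :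
    ∃ m ≤ N, f m = 0 := by
  induction N with
  | zero => exact ⟨0, le_refl 0, le_antisymm h0 hN⟩
  | succ N ih =>
    by_cases h : 0 ≤ f N
    · obtain ⟨m, hm, hfm⟩ := ih (fun m hm => hstep m (hm.trans (Nat.lt_succ_self N)))
        (fun m hm => heven m (hm.trans (Nat.le_succ N))) h
      exact ⟨m, hm.trans (Nat.le_succ N), hfm⟩
    · push_neg at h
      refine ⟨N + 1, le_refl _, le_antisymm ?_ hN⟩
      have hs := hstep N (Nat.lt_succ_self N)
      have h1 : f (N + 1) ≤ f N + 2 := by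
        have := abs_le.1 hs; omega
      have he := heven (N + 1) (le_refl _)
      obtain ⟨c, hc⟩ := he
      omega

theorem stmt1 (k : ℕ) (hk : 1 ≤ k) (S : Finset (Fin (2 * k) → ℝ))
    (hcard : S.card = 2 * k + 3) (hgp : GenPos (2 * k) S) :
    ∃ A B : Finset (Fin (2 * k) → ℝ), A ⊆ S ∧ B ⊆ S ∧ Disjoint A B ∧
      A.card = k + 1 ∧ B.card = k + 1 ∧
      (convexHull ℝ (A : Set (Fin (2 * k) → ℝ)) ∩
        convexHull ℝ (B : Set (Fin (2 * k) → ℝ))).Nonempty := by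
  classical
  set n := 2 * k + 3 with hn
  let e := S.equivFin
  let p : Fin n → (Fin (2 * k) → ℝ) := fun i => (e.symm (Fin.cast hcard.symm i) : _)
  have hpmem : ∀ i, p i ∈ S := fun i => (e.symm _).2
  have hpinj : Function.Injective p := by
    intro i j hij
    have h2 := e.symm.injective (Subtype.ext hij)
    have h3 := congrArg (Fin.cast hcard) h2
    simpa using h3
  let Φ : (Fin n → ℝ) →ₗ[ℝ] (Fin (2 * k) → ℝ) × ℝ :=
    { toFun := fun w => (∑ i, w i • p i, ∑ i, w i)
      map_add' := by
        intro w₁ w₂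
        simp [add_smul, Finset.sum_add_distrib]
      map_smul' := by
        intro c w
        simp [smul_smul, Finset.smul_sum, Finset.mul_sum] }
  have hΦ_apply : ∀ w, Φ w = (∑ i, w i • p i, ∑ i, w i) := fun w => rfl
  have hkerdim : 2 ≤ Module.finrank ℝ (LinearMap.ker Φ) := by
    have h1 := LinearMap.finrank_range_add_finrank_ker Φ
    have h2 : Module.finrank ℝ (LinearMap.range Φ) ≤ 2 * k + 1 := by
      have h3 := Submodule.finrank_le (LinearMap.range Φ)
      have h4 : Module.finrank ℝ ((Fin (2 * k) → ℝ) × ℝ) = 2 * k + 1 := by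
        simp [Module.finrank_prod, Module.finrank_pi]
      omega
    have h3 : Module.finrank ℝ (Fin n → ℝ) = n := by simp [Module.finrank_pi]
    omega
  obtain ⟨f, hf⟩ := exists_linearIndependent_of_le_finrank hkerdim
  let u : Fin n → ℝ := (f 0 : _)
  let v0 : Fin n → ℝ := (f 1 : _)
  have hu_mem : u ∈ LinearMap.ker Φ := (f 0).2
  have hv0_mem : v0 ∈ LinearMap.ker Φ := (f 1).2
  have hindep : ∀ a b : ℝ, a • u + b • v0 = 0 → a = 0 ∧ b = 0 := by
    have hf' : LinearIndependent ℝ (fun i => ((f i : (Fin n → ℝ)))) :=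
      hf.map' (LinearMap.ker Φ).subtype (Submodule.ker_subtype _)
    intro a b hab
    have h := Fintype.linearIndependent_iff.1 hf' ![a, b] ?_
    · exact ⟨h 0, h 1⟩
    · rw [Fin.sum_univ_two]
      simpa using hab
  -- two-zeros lemma from general position
  have hZ : ∀ w ∈ LinearMap.ker Φ, ∀ i j : Fin n, i ≠ j → w i = 0 → w j = 0 → w = 0 := by
    intro w hw i j hij hwi hwj
    have hΦw : Φ w = 0 := hw
    rw [hΦ_apply] at hΦw
    have hvec : ∑ l, w l • p l = 0 := congrArg Prod.fst hΦw
    have hsum : ∑ l, w l = 0 := congrArg Prod.snd hΦw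
    set T := (S.erase (p i)).erase (p j) with hT
    have hTsub : T ⊆ S := (Finset.erase_subset _ _).trans (Finset.erase_subset _ _)
    have hpj : p j ∈ S.erase (p i) :=
      Finset.mem_erase.2 ⟨fun h => hij (hpinj h).symm, hpmem j⟩
    have hTcard : T.card = 2 * k + 1 := by
      rw [hT, Finset.card_erase_of_mem hpj, Finset.card_erase_of_mem (hpmem i), hcard]
      omega
    have hTaff := hgp T hTsub hTcard
    let J := {l : Fin n // p l ∈ T}
    have hmemJ : ∀ x : Fin n, x ∈ univ.filter (fun l : Fin n => p l ∈ T) ↔ p x ∈ T := by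
      intro x; simp
    let φ : J ↪ (T : Set (Fin (2 * k) → ℝ)) :=
      ⟨fun l => ⟨p l.1, by exact_mod_cast l.2⟩, by
        intro a b hab
        have h2 : p a.1 = p b.1 := congrArg (fun x : (T : Set (Fin (2 * k) → ℝ)) => (x : Fin (2 * k) → ℝ)) hab
        exact Subtype.ext (hpinj h2)⟩
    have hq : AffineIndependent ℝ (fun l : J => p l.1) := hTaff.comp_embedding φ
    have hfilter_sub : univ.filter (fun l : Fin n => p l ∈ T) ⊆ univ := Finset.filter_subset _ _
    have hzero_off : ∀ x ∈ univ, x ∉ univ.filter (fun l : Fin n => p l ∈ T) → w x = 0 := by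
      intro x _ hx
      rw [hmemJ] at hx
      have hx' : p x = p j ∨ p x = p i := by
        rw [hT] at hx
        by_cases h1 : p x = p j
        · exact Or.inl h1
        by_cases h2 : p x = p i
        · exact Or.inr h2
        exact absurd (Finset.mem_erase.2 ⟨h1, Finset.mem_erase.2 ⟨h2, hpmem x⟩⟩) hx
      rcases hx' with h | h
      · rw [hpinj h]; exact hwj
      · rw [hpinj h]; exact hwi
    have hkey := affineIndependent_iff.1 hq Finset.univ (fun l => w l.1) ?_ ?_
    · funext l
      by_cases hli : l = i
      · rw [hli]; exact hwi
      by_cases hlj : l = j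
      · rw [hlj]; exact hwj
      have hlT : p l ∈ T := by
        rw [hT]
        exact Finset.mem_erase.2 ⟨fun h => hlj (hpinj h), Finset.mem_erase.2
          ⟨fun h => hli (hpinj h), hpmem l⟩⟩
      exact hkey ⟨l, hlT⟩ (Finset.mem_univ _)
    · rw [← Finset.sum_subtype _ hmemJ w]
      rw [Finset.sum_subset hfilter_sub hzero_off]
      exact hsum
    · rw [← Finset.sum_subtype _ hmemJ (fun l => w l • p l)]
      rw [Finset.sum_subset hfilter_sub (fun x h1 h2 => by rw [hzero_off x h1 h2, zero_smul])]
      exact hvec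
  -- a handy consequence: a nonzero combination can't vanish
  have hcomb : ∀ a b : ℝ, (a ≠ 0 ∨ b ≠ 0) →
      (fun i => a * u i + b * v0 i) ≠ (0 : Fin n → ℝ) := by
    intro a b hab h
    have h' : a • u + b • v0 = 0 := by
      funext i; have := congrFun h i; simpa using this
    obtain ⟨ha, hb⟩ := hindep a b h'
    rcases hab with h1 | h1
    · exact h1 ha
    · exact h1 hb
  have hcombker : ∀ a b : ℝ, (fun i => a * u i + b * v0 i) ∈ LinearMap.ker Φ := by
    intro a b
    have : (fun i => a * u i + b * v0 i) = a • u + b • v0 := by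
      funext i; simp
    rw [this]
    exact Submodule.add_mem _ (Submodule.smul_mem _ _ hu_mem) (Submodule.smul_mem _ _ hv0_mem)
  -- (u i, v0 i) ≠ (0,0)
  have hnz : ∀ i : Fin n, u i ≠ 0 ∨ v0 i ≠ 0 := by
    intro i
    by_contra h
    push_neg at h
    obtain ⟨hui, hvi⟩ := h
    have hnt : Nontrivial (Fin n) := by
      refine ⟨⟨0, by omega⟩, ⟨1, by omega⟩, ?_⟩
      intro h
      have := congrArg Fin.val h
      simp at this
    obtain ⟨j, hj⟩ := exists_ne i
    by_cases hjz : u j = 0 ∧ v0 j = 0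
    · have : u = 0 := hZ u hu_mem i j (Ne.symm hj) hui hjz.1
      exact absurd ((hindep 1 0 (by rw [this]; simp)).1) one_ne_zero
    · have hw := hcombker (v0 j) (-u j)
      have hwi : v0 j * u i + (-u j) * v0 i = 0 := by rw [hui, hvi]; ring
      have hwj : v0 j * u j + (-u j) * v0 j = 0 := by ring
      have h0 := hZ _ hw i j (Ne.symm hj) hwi hwj
      have := hcomb (v0 j) (-u j) ?_ h0
      · exact this
      · by_cases h1 : v0 j = 0
        · right
          simp only [neg_ne_zero]
          exact fun h2 => hjz ⟨h2, h1⟩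
        · exact Or.inl h1
  -- pairwise non-proportionality
  have hprop : ∀ i j : Fin n, i ≠ j → u i * v0 j ≠ u j * v0 i := by
    intro i j hij heq
    have hw := hcombker (v0 i) (-u i)
    have hwi : v0 i * u i + (-u i) * v0 i = 0 := by ring
    have hwj : v0 i * u j + (-u i) * v0 j = 0 := by
      have : u i * v0 j = u j * v0 i := heq
      nlinarith [this]
    have h0 := hZ _ hw i j hij hwi hwj
    have := hcomb (v0 i) (-u i) ?_ h0
    · exact this
    · rcases hnz i with h | h
      · right; simpa using h
      · exact Or.inl h
  -- perturb v0 to make all coordinates nonzero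
  obtain ⟨c, hc⟩ := Finset.exists_notMem
    ((univ.filter (fun i : Fin n => u i ≠ 0)).image (fun i => -v0 i / u i))
  let vv : Fin n → ℝ := fun i => v0 i + c * u i
  have hvv_mem : vv ∈ LinearMap.ker Φ := by
    have : vv = (fun i => c * u i + 1 * v0 i) := by funext i; simp [vv]; ring
    rw [this]; exact hcombker c 1
  have hvv_ne : ∀ i, vv i ≠ 0 := by
    intro i hzero
    by_cases hui : u i = 0
    · rcases hnz i with h | h
      · exact h hui
      · apply h
        have : vv i = v0 i := by simp [vv, hui]
        rw [← this]; exact hzero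
    · apply hc
      rw [Finset.mem_image]
      refine ⟨i, by simp [hui], ?_⟩
      have : v0 i + c * u i = 0 := hzero
      field_simp
      linarith [this]
  have hprop' : ∀ i j : Fin n, i ≠ j → u i * vv j ≠ u j * vv i := by
    intro i j hij heq
    apply hprop i j hij
    have : u i * (v0 j + c * u j) = u j * (v0 i + c * u i) := heq
    nlinarith [this]
  -- slopes
  let s : Fin n → ℝ := fun i => -u i / vv i
  have hs_inj : Function.Injective s := by
    intro i j hij
    by_contra hne
    apply hprop' i j hne
    have h1 : -u i / vv i = -u j / vv j := hij
    have h2 := (div_eq_div_iff (hvv_ne i) (hvv_ne j)).1 h1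
    nlinarith [h2]
  have hcoord : ∀ (t : ℝ) (i : Fin n), u i + t * vv i = vv i * (t - s i) := by
    intro t i
    have h := hvv_ne i
    have h2 : vv i * s i = -u i := by simp only [s]; rw [mul_comm]; exact div_mul_cancel₀ _ h
    rw [mul_sub, h2]
    ring
  -- the family of dependencies
  let lam : ℝ → Fin n → ℝ := fun t i => u i + t * vv i
  have hlam_mem : ∀ t, lam t ∈ LinearMap.ker Φ := by
    intro t
    have : lam t = (fun i => 1 * u i + t * v0 i + (t * c) * u i) := by
      funext i; simp [lam, vv]; ring
    have h2 : lam t = (fun i => (1 + t * c) * u i + t * v0 i) := by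
      rw [this]; funext i; ring
    rw [h2]; exact hcombker _ _
  -- sorting
  let σ : Equiv.Perm (Fin n) := Tuple.sort s
  have hst : StrictMono (s ∘ σ) :=
    (Tuple.monotone_sort s).strictMono_of_injective (hs_inj.comp σ.injective)
  let ε : Fin n → ℤ := fun l => zsgn (vv (σ l))
  have hε : ∀ l, ε l = 1 ∨ ε l = -1 := by
    intro l
    rcases lt_trichotomy (vv (σ l)) 0 with h | h | h
    · right; exact zsgn_neg h
    · exact absurd h (hvv_ne _)
    · left; exact zsgn_pos h
  let C : ℕ → Fin n → ℤ := fun m l => if (l : ℕ) < m then 1 else if m < (l : ℕ) then -1 else 0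
  let F : ℕ → ℤ := fun m => ∑ l, ε l * C m l
  have hF : ∀ mm : Fin n, F (mm : ℕ) = ∑ i, zsgn (lam (s (σ mm)) i) := by
    intro mm
    rw [← Equiv.sum_comp σ (fun i => zsgn (lam (s (σ mm)) i))]
    apply Finset.sum_congr rfl
    intro l _
    have h1 : lam (s (σ mm)) (σ l) = vv (σ l) * (s (σ mm) - s (σ l)) := hcoord _ _
    rw [h1, zsgn_mul]
    have hC : (zsgn (s (σ mm) - s (σ l))) = C (mm : ℕ) l := by
      rcases lt_trichotomy ((l : ℕ)) ((mm : ℕ)) with h | h | h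
      · have hlt : s (σ l) < s (σ mm) := hst (show l < mm from h)
        rw [zsgn_pos (by linarith)]
        simp only [C]
        rw [if_pos h]
      · have hlm : l = mm := Fin.ext h
        rw [hlm, sub_self, zsgn_zero]
        simp only [C]
        rw [if_neg (by omega), if_neg (by omega)]
      · have hlt : s (σ mm) < s (σ l) := hst (show mm < l from h)
        rw [zsgn_neg (by linarith)]
        simp only [C]
        rw [if_neg (by omega), if_pos h]
    rw [hC]
  -- unique zero coordinate at each sorted slope
  have huniq : ∀ mm : Fin n,
      (univ.filter fun i => 0 < lam (s (σ mm)) i).card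
      + (univ.filter fun i => lam (s (σ mm)) i < 0).card = 2 * k + 2 := by
    intro mm
    have hz1 : lam (s (σ mm)) (σ mm) = 0 := by
      rw [show lam (s (σ mm)) (σ mm) = vv (σ mm) * (s (σ mm) - s (σ mm)) from hcoord _ _]
      simp
    have hz2 : ∀ i, i ≠ σ mm → lam (s (σ mm)) i ≠ 0 := by
      intro i hi
      rw [show lam (s (σ mm)) i = vv i * (s (σ mm) - s i) from hcoord _ _]
      apply mul_ne_zero (hvv_ne i)
      intro h
      have h2 : s (σ mm) = s i := by linarith [sub_eq_zero.1 h]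
      exact hi (hs_inj h2).symm
    have hzf : univ.filter (fun i => lam (s (σ mm)) i = 0) = {σ mm} := by
      ext i
      simp only [mem_filter, mem_univ, true_and, mem_singleton]
      constructor
      · intro h; by_contra hne; exact hz2 i hne h
      · intro h; rw [h]; exact hz1
    have h1 := Finset.card_filter_add_card_filter_not
      (s := (univ : Finset (Fin n))) (p := fun i => lam (s (σ mm)) i = 0)
    rw [hzf] at h1
    have hcardu : (univ : Finset (Fin n)).card = n := by simp
    have h2 : (univ.filter (fun i => ¬ lam (s (σ mm)) i = 0)).card = 2 * k + 2 := by
      rw [Finset.card_singleton] at h1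
      omega
    have h3 : univ.filter (fun i => ¬ lam (s (σ mm)) i = 0)
        = (univ.filter fun i => 0 < lam (s (σ mm)) i) ∪
          (univ.filter fun i => lam (s (σ mm)) i < 0) := by
      ext i
      simp only [mem_filter, mem_union, mem_univ, true_and]
      constructor
      · intro h
        rcases lt_trichotomy (lam (s (σ mm)) i) 0 with h' | h' | h'
        · exact Or.inr h'
        · exact absurd h' h
        · exact Or.inl h'
      · rintro (h | h)
        · exact ne_of_gt h
        · exact ne_of_lt h
    have hdisj : Disjoint (univ.filter fun i => 0 < lam (s (σ mm)) i)
        (univ.filter fun i => lam (s (σ mm)) i < 0) := by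
      rw [Finset.disjoint_left]
      intro a ha hb
      simp only [mem_filter] at ha hb
      exact lt_asymm ha.2 hb.2
    rw [← Finset.card_union_of_disjoint hdisj, ← h3, h2]
  -- evenness
  have heven : ∀ m : ℕ, m ≤ 2 * k + 2 → Even (F m) := by
    intro m hm
    have hmn : m < n := by omega
    have h1 := hF ⟨m, hmn⟩
    rw [signsum] at h1
    have h2 := huniq ⟨m, hmn⟩
    refine ⟨((univ.filter fun i => 0 < lam (s (σ ⟨m, hmn⟩)) i).card : ℤ) - (k + 1), ?_⟩
    rw [show F m = F ((⟨m, hmn⟩ : Fin n) : ℕ) from rfl, h1]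
    push_cast at h2
    linarith
  -- steps
  have hstep : ∀ m : ℕ, m + 1 ≤ 2 * k + 2 → |F (m + 1) - F m| ≤ 2 := by
    intro m hm
    have h1 : m < n := by omega
    have h2 : m + 1 < n := by omega
    have hCdiff : ∀ l : Fin n,
        C (m + 1) l - C m l
          = (if (l : ℕ) = m then 1 else 0) + (if (l : ℕ) = m + 1 then 1 else 0) := by
      intro l
      simp only [C]
      split_ifs <;> omega
    have hsum_ind : ∀ (mq : ℕ) (hq : mq < n),
        (∑ l, ε l * if (l : ℕ) = mq then 1 else 0) = ε ⟨mq, hq⟩ := by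
      intro mq hq
      rw [Finset.sum_congr rfl (fun l _ => ?_),
        Finset.sum_ite_eq' univ (⟨mq, hq⟩ : Fin n) ε, if_pos (mem_univ _)]
      by_cases h : (l : ℕ) = mq
      · rw [if_pos h, if_pos (Fin.ext h), mul_one]
      · rw [if_neg h, if_neg (fun hh => h (by rw [hh])), mul_zero]
    have heq : F (m + 1) - F m = ε ⟨m, h1⟩ + ε ⟨m + 1, h2⟩ := by
      have e1 : F (m + 1) - F m = ∑ l, (ε l * C (m + 1) l - ε l * C m l) := by
        rw [Finset.sum_sub_distrib]
      have e2 : ∑ l, (ε l * C (m + 1) l - ε l * C m l)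
          = ∑ l, (ε l * (if (l : ℕ) = m then 1 else 0)
            + ε l * (if (l : ℕ) = m + 1 then 1 else 0)) :=
        Finset.sum_congr rfl (fun l _ => by rw [← mul_sub, hCdiff l, mul_add])
      rw [e1, e2, Finset.sum_add_distrib, hsum_ind m h1, hsum_ind (m + 1) h2]
    rw [heq]
    rcases hε ⟨m, h1⟩ with h | h <;> rcases hε ⟨m + 1, h2⟩ with h' | h' <;>
      rw [h, h'] <;> norm_num
  -- endpoints
  let E : ℤ := ∑ l, ε l
  have hz0 : (0 : ℕ) < n := by omega
  have hzl : 2 * k + 2 < n := by omega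
  have hF0 : F 0 = ε ⟨0, hz0⟩ - E := by
    have hterm : ∀ l : Fin n,
        ε l * C 0 l = (if l = (⟨0, hz0⟩ : Fin n) then ε l else 0) - ε l := by
      intro l
      by_cases h : (l : ℕ) = 0
      · rw [if_pos (Fin.ext h)]
        have hc : C 0 l = 0 := by
          simp only [C]
          rw [if_neg (by omega), if_neg (by omega)]
        rw [hc]
        ring
      · rw [if_neg (fun hh => h (by rw [hh]))]
        have hc : C 0 l = -1 := by
          simp only [C]
          rw [if_neg (by omega), if_pos (by omega)]
        rw [hc]
        ring
    rw [show F 0 = ∑ l, ε l * C 0 l from rfl, Finset.sum_congr rfl (fun l _ => hterm l),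
      Finset.sum_sub_distrib, Finset.sum_ite_eq' univ (⟨0, hz0⟩ : Fin n) ε,
      if_pos (mem_univ _)]
  have hFlast : F (2 * k + 2) = E - ε ⟨2 * k + 2, hzl⟩ := by
    have hterm : ∀ l : Fin n,
        ε l * C (2 * k + 2) l = ε l - (if l = (⟨2 * k + 2, hzl⟩ : Fin n) then ε l else 0) := by
      intro l
      have hl : (l : ℕ) < n := l.2
      by_cases h : (l : ℕ) = 2 * k + 2
      · rw [if_pos (Fin.ext h)]
        have hc : C (2 * k + 2) l = 0 := by
          simp only [C]
          rw [if_neg (by omega), if_neg (by omega)]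
        rw [hc]
        ring
      · rw [if_neg (fun hh => h (by rw [hh]))]
        have hc : C (2 * k + 2) l = 1 := by
          simp only [C]
          rw [if_pos (by omega)]
        rw [hc]
        ring
    rw [show F (2 * k + 2) = ∑ l, ε l * C (2 * k + 2) l from rfl,
      Finset.sum_congr rfl (fun l _ => hterm l), Finset.sum_sub_distrib,
      Finset.sum_ite_eq' univ (⟨2 * k + 2, hzl⟩ : Fin n) ε, if_pos (mem_univ _)]
  have hEne : E ≠ 0 := by
    intro hE0
    have he0 := heven 0 (by omega)
    rw [hF0, hE0, sub_zero] at he0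
    obtain ⟨cc, hcc⟩ := he0
    rcases hε ⟨0, hz0⟩ with h | h <;> rw [h] at hcc <;> omega
  -- find balanced position
  have hmain : ∃ m ≤ 2 * k + 2, F m = 0 := by
    rcases lt_or_gt_of_ne hEne with hE | hE
    · obtain ⟨m, hm, h0⟩ := ivt (2 * k + 2) (fun m => -F m)
        (fun m hm => by
          rw [show -F (m + 1) - -F m = -(F (m + 1) - F m) by ring, abs_neg]
          exact hstep m (by omega))
        (fun m hm => by
          simpa using (heven m hm).neg)
        (by
          rw [hF0]
          rcases hε ⟨0, hz0⟩ with h | h <;> rw [h] <;> omega)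
        (by
          rw [hFlast]
          rcases hε ⟨2 * k + 2, hzl⟩ with h | h <;> rw [h] <;> omega)
      exact ⟨m, hm, by omega⟩
    · obtain ⟨m, hm, h0⟩ := ivt (2 * k + 2) F (fun m hm => hstep m (by omega)) heven
        (by
          rw [hF0]
          rcases hε ⟨0, hz0⟩ with h | h <;> rw [h] <;> omega)
        (by
          rw [hFlast]
          rcases hε ⟨2 * k + 2, hzl⟩ with h | h <;> rw [h] <;> omega)
      exact ⟨m, hm, h0⟩
  obtain ⟨m, hm, hFm0⟩ := hmain
  have hmn : m < n := by omega
  -- the balanced dependence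
  set t := s (σ ⟨m, hmn⟩) with ht
  set lam0 : Fin n → ℝ := lam t with hlam0
  set P := univ.filter (fun i => 0 < lam0 i) with hPdef
  set N := univ.filter (fun i => lam0 i < 0) with hNdef
  have hPN : P.card + N.card = 2 * k + 2 := huniq ⟨m, hmn⟩
  have hFmm : (P.card : ℤ) - N.card = 0 := by
    have h1 := hF ⟨m, hmn⟩
    rw [signsum] at h1
    rw [← h1]
    exact hFm0
  have hPcard : P.card = k + 1 := by omega
  have hNcard : N.card = k + 1 := by omega
  have hker0 : Φ lam0 = 0 := hlam_mem t
  rw [hΦ_apply] at hker0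
  have hvec0 : ∑ i, lam0 i • p i = 0 := congrArg Prod.fst hker0
  have hsum0 : ∑ i, lam0 i = 0 := congrArg Prod.snd hker0
  have hsplit1 := split_sum lam0 lam0 (fun i h => h)
  have hsplit2 := split_sum lam0 (fun i => lam0 i • p i) (fun i h => by show lam0 i • p i = 0; rw [h, zero_smul])
  have hPsum : ∑ i ∈ P, lam0 i = ∑ i ∈ N, -lam0 i := by
    rw [Finset.sum_neg_distrib]
    have h1 : ∑ i ∈ P, lam0 i + ∑ i ∈ N, lam0 i = 0 := by
      rw [hPdef, hNdef, hsplit1]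
      exact hsum0
    linarith
  have hPvec : ∑ i ∈ P, lam0 i • p i = ∑ i ∈ N, (-lam0 i) • p i := by
    have h1 : ∑ i ∈ P, lam0 i • p i + ∑ i ∈ N, lam0 i • p i = 0 := by
      rw [hPdef, hNdef, hsplit2]
      exact hvec0
    have h2 : ∑ i ∈ N, (-lam0 i) • p i = -∑ i ∈ N, lam0 i • p i := by
      rw [← Finset.sum_neg_distrib]
      exact Finset.sum_congr rfl (fun i _ => neg_smul _ _)
    rw [h2]
    exact eq_neg_of_add_eq_zero_left h1
  have hPne : P.Nonempty := Finset.card_pos.1 (by omega)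
  have hPpos : 0 < ∑ i ∈ P, lam0 i :=
    Finset.sum_pos (fun i hi => (Finset.mem_filter.1 hi).2) hPne
  have hdisjPN : Disjoint P N := by
    rw [Finset.disjoint_left]
    intro a ha hb
    rw [hPdef, Finset.mem_filter] at ha
    rw [hNdef, Finset.mem_filter] at hb
    exact lt_asymm ha.2 hb.2
  refine ⟨P.image p, N.image p, ?_, ?_, ?_, ?_, ?_, ?_⟩
  · intro x hx
    obtain ⟨i, _, rfl⟩ := Finset.mem_image.1 hx
    exact hpmem i
  · intro x hx
    obtain ⟨i, _, rfl⟩ := Finset.mem_image.1 hx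
    exact hpmem i
  · exact (Finset.disjoint_image hpinj).2 hdisjPN
  · rw [Finset.card_image_of_injective _ hpinj, hPcard]
  · rw [Finset.card_image_of_injective _ hpinj, hNcard]
  · refine ⟨P.centerMass lam0 p, ?_, ?_⟩
    · exact Finset.centerMass_mem_convexHull P
        (fun i hi => ((Finset.mem_filter.1 hi).2).le) hPpos
        (fun i hi => Finset.mem_coe.2 (Finset.mem_image_of_mem p hi))
    · have hx : P.centerMass lam0 p = N.centerMass (fun i => -lam0 i) p := by
        simp only [Finset.centerMass]
        rw [hPsum, hPvec]
      rw [hx]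
      exact Finset.centerMass_mem_convexHull N
        (fun i hi => neg_nonneg.2 ((Finset.mem_filter.1 hi).2).le)
        (by rw [← hPsum]; exact hPpos)
        (fun i hi => Finset.mem_coe.2 (Finset.mem_image_of_mem p hi))
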